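/- For any K ∈ ℕ, the symmetric matrix M ∈ ℝ^{K×K} with entries M_{r,s} = rs/(r+s) for r, s ∈ {1,…,K} is positive definite. -/

import Mathlib

open MeasureTheory Polynomial Finset

lemma quad_eq (K : ℕ) (x : Fin K → ℝ) :
    (∑ r : Fin K, ∑ s : Fin K, x r *
      ((((r : ℝ) + 1) * ((s : ℝ) + 1)) / (((r : ℝ) + 1) + ((s : ℝ) + 1)) * x s))
    = ∫ t in (0:ℝ)..1, t * (∑ r : Fin K, x r * ((r : ℝ) + 1) * t ^ (r : ℕ)) ^ 2 := by
  have hpt : ∀ t : ℝ, t * (∑ r : Fin K, x r * ((r : ℝ) + 1) * t ^ (r : ℕ)) ^ 2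
      = ∑ r : Fin K, ∑ s : Fin K,
        (x r * ((r : ℝ) + 1) * (x s * ((s : ℝ) + 1))) * t ^ ((r : ℕ) + (s : ℕ) + 1) := by
    intro t
    rw [sq, Finset.sum_mul_sum, Finset.mul_sum]
    refine Finset.sum_congr rfl fun r _ => ?_
    rw [Finset.mul_sum]
    refine Finset.sum_congr rfl fun s _ => ?_
    ring
  have hint : ∀ (c : ℝ) (n : ℕ), ∫ t in (0:ℝ)..1, c * t ^ n = c / (n + 1) := by
    intro c n
    rw [intervalIntegral.integral_const_mul, integral_pow]
    simp [zero_pow (Nat.succ_ne_zero n)]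
    ring
  calc (∑ r : Fin K, ∑ s : Fin K, x r *
      ((((r : ℝ) + 1) * ((s : ℝ) + 1)) / (((r : ℝ) + 1) + ((s : ℝ) + 1)) * x s))
      = ∑ r : Fin K, ∑ s : Fin K,
        ∫ t in (0:ℝ)..1, (x r * ((r : ℝ) + 1) * (x s * ((s : ℝ) + 1))) * t ^ ((r : ℕ) + (s : ℕ) + 1) := by
        refine Finset.sum_congr rfl fun r _ => Finset.sum_congr rfl fun s _ => ?_
        rw [hint]
        push_cast
        have h1 : ((r : ℝ) + 1) + ((s : ℝ) + 1) ≠ 0 := by positivity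
        have h2 : ((r : ℝ) + (s : ℝ) + 1 + 1) ≠ 0 := by positivity
        field_simp
        ring
    _ = ∫ t in (0:ℝ)..1, ∑ r : Fin K, ∑ s : Fin K,
        (x r * ((r : ℝ) + 1) * (x s * ((s : ℝ) + 1))) * t ^ ((r : ℕ) + (s : ℕ) + 1) := by
        rw [intervalIntegral.integral_finset_sum]
        · refine Finset.sum_congr rfl fun r _ => ?_
          rw [intervalIntegral.integral_finset_sum]
          intro s _
          exact (Continuous.intervalIntegrable (by continuity) _ _)
        · intro r _
          apply Continuous.intervalIntegrable
          continuity
    _ = ∫ t in (0:ℝ)..1, t * (∑ r : Fin K, x r * ((r : ℝ) + 1) * t ^ (r : ℕ)) ^ 2 := by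
        refine intervalIntegral.integral_congr fun t _ => ?_
        rw [hpt]

lemma int_pos (K : ℕ) (x : Fin K → ℝ) (hx : x ≠ 0) :
    0 < ∫ t in (0:ℝ)..1, t * (∑ r : Fin K, x r * ((r : ℝ) + 1) * t ^ (r : ℕ)) ^ 2 := by
  set f : ℝ → ℝ := fun t => t * (∑ r : Fin K, x r * ((r : ℝ) + 1) * t ^ (r : ℕ)) ^ 2 with hf
  set Q : Polynomial ℝ := ∑ r : Fin K, Polynomial.C (x r * ((r : ℝ) + 1)) * Polynomial.X ^ (r : ℕ) with hQ
  have heval : ∀ t : ℝ, Q.eval t = ∑ r : Fin K, x r * ((r : ℝ) + 1) * t ^ (r : ℕ) := by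
    intro t
    rw [hQ, Polynomial.eval_finset_sum]
    simp
  have hQne : Q ≠ 0 := by
    obtain ⟨r₀, hr₀⟩ := Function.ne_iff.mp hx
    simp only [Pi.zero_apply] at hr₀
    intro h
    have hc : Q.coeff (r₀ : ℕ) = x r₀ * ((r₀ : ℝ) + 1) := by
      rw [hQ, Polynomial.finset_sum_coeff]
      rw [Finset.sum_eq_single r₀]
      · simp only [Polynomial.coeff_C_mul, Polynomial.coeff_X_pow, if_pos rfl, mul_one, if_true, eq_self_iff_true]
      · intro s _ hs
        simp only [Polynomial.coeff_C_mul, Polynomial.coeff_X_pow]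
        rw [if_neg (fun hss => hs (Fin.ext hss.symm))]
        ring
      · simp
    rw [h] at hc
    simp only [Polynomial.coeff_zero] at hc
    have : x r₀ * ((r₀ : ℝ) + 1) ≠ 0 := by
      apply mul_ne_zero hr₀
      positivity
    exact this hc.symm
  have hroots : Set.Finite {t : ℝ | Q.IsRoot t} := Polynomial.finite_setOf_isRoot hQne
  rw [intervalIntegral.integral_of_le zero_le_one]
  rw [setIntegral_pos_iff_support_of_nonneg_ae]
  · refine lt_of_lt_of_le ?_ (measure_mono (show Set.Ioc (0:ℝ) 1 \ {t | Q.IsRoot t} ⊆ Function.support f ∩ Set.Ioc 0 1 from ?_))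
    · rw [measure_diff_null (hroots.measure_zero _)]
      simp
    · rintro t ⟨ht, hroot⟩
      refine ⟨?_, ht⟩
      simp only [Function.mem_support, hf]
      have ht0 : (0:ℝ) < t := ht.1
      have h1 : Q.eval t ≠ 0 := hroot
      rw [heval] at h1
      positivity
  · filter_upwards [ae_restrict_mem measurableSet_Ioc] with t ht
    have : (0:ℝ) < t := ht.1
    positivity
  · apply Continuous.integrableOn_Ioc
    continuity

theorem stmt_6 (K : ℕ) :
    Matrix.PosDef (Matrix.of fun r s : Fin K =>
      (((r : ℝ) + 1) * ((s : ℝ) + 1)) / (((r : ℝ) + 1) + ((s : ℝ) + 1))) := by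
  refine Matrix.posDef_iff_dotProduct_mulVec.mpr ⟨?_, ?_⟩
  · ext i j
    simp [Matrix.conjTranspose_apply]
    ring
  · intro x hx
    have hd : dotProduct (star x) ((Matrix.of fun r s : Fin K =>
        (((r : ℝ) + 1) * ((s : ℝ) + 1)) / (((r : ℝ) + 1) + ((s : ℝ) + 1))).mulVec x)
        = ∑ r : Fin K, ∑ s : Fin K, x r *
          ((((r : ℝ) + 1) * ((s : ℝ) + 1)) / (((r : ℝ) + 1) + ((s : ℝ) + 1)) * x s) := by
      simp [dotProduct, Matrix.mulVec, Finset.mul_sum]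
    rw [hd, quad_eq]
    exact int_pos K x hx
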